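/- Let t be a positive integer, let ℓ be an integer with ℓ ≥ 4^t, and let x ∈ [0, t]. Define P(y) := 1 − y + y². Then |e^{−x} − (P(x/ℓ))^ℓ| ≤ 4^{−t}. -/

import Mathlib

/-- `4 * t^2 ≤ 4^t` for `t ≥ 1`. -/
lemma four_sq_le_four_pow (t : ℕ) (ht : 1 ≤ t) : 4 * t ^ 2 ≤ 4 ^ t := by
  induction t with
  | zero => omega
  | succ n ih =>
    rcases Nat.eq_or_lt_of_le ht with h | h
    · simp [← h]
    · have hn : 1 ≤ n := by omega
      have := ih hn
      have : 4 * (n + 1) ^ 2 ≤ 4 * (4 * n ^ 2) := by nlinarith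
      calc 4 * (n + 1) ^ 2 ≤ 4 * (4 * n ^ 2) := this
        _ ≤ 4 * 4 ^ n := by omega
        _ = 4 ^ (n + 1) := by ring

/-- `x^2 ≤ (3/4) * exp x` for `x ≥ 0`. -/
lemma sq_le_exp_aux (x : ℝ) (hx : 0 ≤ x) : x ^ 2 ≤ 3 / 4 * Real.exp x := by
  have h := Real.sum_le_exp_of_nonneg hx 5
  have hsum : ∑ i ∈ Finset.range 5, x ^ i / i.factorial
      = 1 + x + x ^ 2 / 2 + x ^ 3 / 6 + x ^ 4 / 24 := by
    norm_num [Finset.sum_range_succ, Nat.factorial]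
  rw [hsum] at h
  nlinarith [sq_nonneg (x - 2), sq_nonneg (x ^ 2 - 4), sq_nonneg x, sq_nonneg (x ^ 2 - 2 * x), mul_nonneg hx (sq_nonneg (x - 2))]

set_option maxHeartbeats 1000000 in
/-- Approximation of e^{−x} by iterated powers of the quadratic Taylor
truncation P(y) = 1 − y + y². -/
theorem exp_approx_by_iterated_squares
    (t : ℕ) (ht : 0 < t) (ℓ : ℤ) (hℓ : (4:ℤ) ^ t ≤ ℓ) (x : ℝ)
    (hx : x ∈ Set.Icc (0:ℝ) (t:ℝ)) :
    |Real.exp (-x) - (1 - x / (ℓ:ℝ) + (x / (ℓ:ℝ))^2) ^ ℓ| ≤ 1 / 4 ^ t := by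
  obtain ⟨hx0, hxt⟩ := hx
  have hℓpos : (0:ℤ) < ℓ := lt_of_lt_of_le (by positivity) hℓ
  lift ℓ to ℕ using hℓpos.le with n
  rw [zpow_natCast, show ((n:ℤ):ℝ) = (n:ℝ) by push_cast; rfl]
  set L : ℝ := (n : ℝ) with hLdef
  have hn4 : 4 ^ t ≤ n := by exact_mod_cast hℓ
  have hLpow : (4:ℝ) ^ t ≤ L := by rw [hLdef]; exact_mod_cast hn4
  have h4t : (4:ℝ) ≤ 4 ^ t := by
    calc (4:ℝ) = 4 ^ 1 := (pow_one 4).symm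
    _ ≤ 4 ^ t := by gcongr <;> [norm_num; omega]
  have hL4 : (4:ℝ) ≤ L := le_trans h4t hLpow
  have hLpos : (0:ℝ) < L := by linarith
  set y : ℝ := x / L with hydef
  have hy0 : 0 ≤ y := div_nonneg hx0 hLpos.le
  -- key numeric bound: 4 * t^2 ≤ 4^t in ℝ
  have htsq : 4 * (t:ℝ) ^ 2 ≤ 4 ^ t := by
    exact_mod_cast four_sq_le_four_pow t ht
  have hxsq : 4 * x ^ 2 ≤ L := by
    have : x ^ 2 ≤ (t:ℝ) ^ 2 := by nlinarith
    nlinarith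
  -- u := x^2 / L ≤ 1/4
  set u : ℝ := x ^ 2 / L with hudef
  have hu0 : 0 ≤ u := div_nonneg (sq_nonneg x) hLpos.le
  have hu14 : u ≤ 1 / 4 := by
    rw [hudef, div_le_div_iff₀ hLpos (by norm_num)]
    linarith
  have hy1 : y ≤ 1 := by
    rw [hydef, div_le_one hLpos]
    have ht1 : (1:ℝ) ≤ (t:ℝ) := by exact_mod_cast ht
    nlinarith
  -- lower bound: exp(-y) ≤ P(y)
  have hlow : Real.exp (-y) ≤ 1 - y + y ^ 2 := by
    have habs : |(-y)| ≤ 1 := by rw [abs_neg, abs_of_nonneg hy0]; exact hy1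
    have := Real.abs_exp_sub_one_sub_id_le habs
    have h1 := (abs_le.mp this).2
    nlinarith [this, abs_le.mp this]
  -- upper bound: P(y) ≤ exp(y^2 - y)
  have hupp : 1 - y + y ^ 2 ≤ Real.exp (y ^ 2 - y) := by
    have := Real.add_one_le_exp (y ^ 2 - y)
    linarith
  have hPnn : 0 ≤ 1 - y + y ^ 2 := le_trans (Real.exp_nonneg _) hlow
  -- exponent identities
  have hny : (n : ℝ) * y = x := by
    rw [hydef]; field_simp; rw [hLdef]; ring
  have hny2 : (n : ℝ) * (y ^ 2 - y) = u - x := by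
    rw [hydef, hudef]; field_simp; ring
  have hlowpow : Real.exp (-x) ≤ (1 - y + y ^ 2) ^ n := by
    calc Real.exp (-x) = Real.exp ((n:ℝ) * (-y)) := by rw [mul_neg, hny]
      _ = Real.exp (-y) ^ n := Real.exp_nat_mul _ n
      _ ≤ (1 - y + y ^ 2) ^ n := pow_le_pow_left₀ (Real.exp_nonneg _) hlow n
  have hupppow : (1 - y + y ^ 2) ^ n ≤ Real.exp (u - x) := by
    calc (1 - y + y ^ 2) ^ n ≤ Real.exp (y ^ 2 - y) ^ n := pow_le_pow_left₀ hPnn hupp n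
      _ = Real.exp ((n:ℝ) * (y ^ 2 - y)) := (Real.exp_nat_mul _ n).symm
      _ = Real.exp (u - x) := by rw [hny2]
  -- final estimate
  rw [abs_sub_comm, abs_of_nonneg (by linarith)]
  have hkey : Real.exp (u - x) - Real.exp (-x) ≤ 1 / L := by
    have hexp1 : Real.exp u - 1 ≤ u * Real.exp u := by
      have hmul : (1 - u) * Real.exp u ≤ Real.exp (-u) * Real.exp u :=
        mul_le_mul_of_nonneg_right (by linarith [Real.add_one_le_exp (-u)])
          (Real.exp_pos u).le
      rw [← Real.exp_add, neg_add_cancel, Real.exp_zero] at hmul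
      nlinarith [hmul]
    have hstep : Real.exp (u - x) - Real.exp (-x)
        = Real.exp (-x) * (Real.exp u - 1) := by
      rw [Real.exp_sub, Real.exp_neg x]
      field_simp
    rw [hstep]
    have h2 : Real.exp (-x) * (Real.exp u - 1)
        ≤ Real.exp (-x) * (u * Real.exp u) := by
      apply mul_le_mul_of_nonneg_left hexp1 (Real.exp_nonneg _)
    have heu : Real.exp u ≤ 4 / 3 := by
      have h3 : (3:ℝ)/4 ≤ Real.exp (-(1/4)) := by
        have := Real.add_one_le_exp (-(1/4:ℝ)); linarith
      have h4 : Real.exp u ≤ Real.exp (1/4) := Real.exp_le_exp.mpr hu14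
      have h5 : Real.exp (1/4:ℝ) * Real.exp (-(1/4:ℝ)) = 1 := by
        rw [← Real.exp_add]; norm_num
      nlinarith [Real.exp_pos (1/4:ℝ), Real.exp_pos (-(1/4):ℝ)]
    have hx2 : x ^ 2 ≤ 3 / 4 * Real.exp x := sq_le_exp_aux x hx0
    have hex : Real.exp (-x) * Real.exp x = 1 := by
      rw [← Real.exp_add]; norm_num
    calc Real.exp (-x) * (Real.exp u - 1)
        ≤ Real.exp (-x) * (u * Real.exp u) := h2
      _ = Real.exp (-x) * x ^ 2 * Real.exp u / L := by rw [hudef]; ring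
      _ ≤ 1 / L := by
          have hnum1 : Real.exp (-x) * x ^ 2 ≤ 3/4 := by
            have h6 := mul_le_mul_of_nonneg_left hx2 (Real.exp_nonneg (-x))
            rw [show Real.exp (-x) * (3 / 4 * Real.exp x)
                = 3 / 4 * (Real.exp (-x) * Real.exp x) by ring, hex] at h6
            linarith
          have hnum : Real.exp (-x) * x ^ 2 * Real.exp u ≤ 1 := by
            nlinarith [Real.exp_pos u, mul_nonneg (Real.exp_nonneg (-x)) (sq_nonneg x)]
          calc Real.exp (-x) * x ^ 2 * Real.exp u / L ≤ 1 / L := by gcongr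
            _ = 1 / L := rfl
    -- end hkey
  calc (1 - y + y ^ 2) ^ n - Real.exp (-x)
      ≤ Real.exp (u - x) - Real.exp (-x) := by linarith
    _ ≤ 1 / L := hkey
    _ ≤ 1 / 4 ^ t := by
        apply div_le_div_of_nonneg_left (by norm_num) (by positivity) hLpow
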